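/- The game {∞̄ | ∞} is the identity of affine normal play: for every affine game G, G + {∞̄ | ∞} is equivalent to G (where equivalence means equal outcomes in all disjunctive sums with games other than ∞ and ∞̄). -/

import Mathlib

inductive AGame : Type
  | inf : AGame
  | binf : AGame
  | node : List AGame → List AGame → AGame

namespace AGame

/-- The affine games: option sets are nonempty (hereditarily). -/
inductive Valid : AGame → Prop
  | inf : Valid .inf
  | binf : Valid .binf
  | node : ∀ {L R : List AGame}, L ≠ [] → R ≠ [] →
      (∀ g ∈ L, Valid g) → (∀ g ∈ R, Valid g) → Valid (.node L R)

/-- Total version of the disjunctive sum (value on the undefined cases `∞ + ∞̄` is junk). -/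
def add' : AGame → AGame → AGame
  | .inf, _ => .inf
  | _, .inf => .inf
  | .binf, _ => .binf
  | _, .binf => .binf
  | .node L R, .node L' R' =>
      .node ((L.attach.map fun x => add' x.1 (.node L' R')) ++
             (L'.attach.map fun y => add' (.node L R) y.1))
            ((R.attach.map fun x => add' x.1 (.node L' R')) ++
             (R'.attach.map fun y => add' (.node L R) y.1))
termination_by G H => sizeOf G + sizeOf H
decreasing_by
  all_goals
    simp_wf
    first
      | (have := List.sizeOf_lt_of_mem x.2; simp_all; omega)
      | (have := List.sizeOf_lt_of_mem y.2; simp_all; omega)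

/-- The disjunctive sum, undefined (`none`) exactly when adding `∞` to `∞̄`. -/
def add : AGame → AGame → Option AGame
  | .inf, .binf => none
  | .binf, .inf => none
  | G, H => some (add' G H)

mutual
/-- `o^L(G) = L` : Left, playing first, wins `G`. -/
def lf : AGame → Bool
  | .inf => true
  | .binf => false
  | .node L _ => L.attach.any fun x => ls x.1
termination_by G => sizeOf G
decreasing_by
  simp_wf; have := List.sizeOf_lt_of_mem x.2; simp_all; omega
/-- `o^R(G) = L` : Left, playing second, wins `G`. -/
def ls : AGame → Bool
  | .inf => true
  | .binf => false
  | .node _ R => R.attach.all fun x => lf x.1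
termination_by G => sizeOf G
decreasing_by
  simp_wf; have := List.sizeOf_lt_of_mem x.2; simp_all; omega
end

/-- The combined outcome `(o^L(G), o^R(G))`, encoded as a pair of booleans
(`true` = Left wins). `(true,true)` is 𝓛, `(true,false)` is 𝓝, `(false,true)` is 𝓟,
`(false,false)` is 𝓡. -/
def outcome (G : AGame) : Bool × Bool := (lf G, ls G)

/-- The partial order of outcomes (componentwise, 𝓛 maximal, 𝓡 minimal, 𝓝 ∥ 𝓟). -/
def OutLE (a b : Bool × Bool) : Prop :=
  (a.1 = true → b.1 = true) ∧ (a.2 = true → b.2 = true)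

/-- `G ≥ H` : replacing `H` by `G` never hurts Left in any disjunctive sum. -/
def GE (G H : AGame) : Prop :=
  ∀ X : AGame, Valid X → X ≠ .inf → X ≠ .binf →
    OutLE (outcome (add' H X)) (outcome (add' G X))

/-- Game equivalence. -/
def Equiv (G H : AGame) : Prop :=
  ∀ X : AGame, Valid X → X ≠ .inf → X ≠ .binf →
    outcome (add' G X) = outcome (add' H X)

/-- The zero game `{∞̄ | ∞}`. -/
def zero : AGame := .node [.binf] [.inf]

/-- The conjugate (players switch roles). -/
def neg : AGame → AGame
  | .inf => .binf
  | .binf => .inf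
  | .node L R =>
      .node (R.attach.map fun x => neg x.1) (L.attach.map fun x => neg x.1)
termination_by G => sizeOf G
decreasing_by
  all_goals
    simp_wf
    (have := List.sizeOf_lt_of_mem x.2; simp_all; omega)


/-- Left option set (empty list for the terminating games). -/
def leftOptions : AGame → List AGame
  | .node L _ => L
  | _ => []

/-- Right option set (empty list for the terminating games). -/
def rightOptions : AGame → List AGame
  | .node _ R => R
  | _ => []

/-- A check: a game having `∞` as a Left option or `∞̄` as a Right option. -/
def IsCheck : AGame → Prop
  | .node L R => .inf ∈ L ∨ .binf ∈ R
  | _ => False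

/-- `Follower H G` : `H` is a follower of `G` (i.e. `G` itself, an option of `G`,
an option of an option, and so on). -/
inductive Follower : AGame → AGame → Prop
  | refl (G : AGame) : Follower G G
  | left {H K : AGame} {L R : List AGame} : K ∈ L → Follower H K → Follower H (.node L R)
  | right {H K : AGame} {L R : List AGame} : K ∈ R → Follower H K → Follower H (.node L R)

/-- A Conway form: distinct from `∞` and `∞̄`, with no checks among its followers. -/
def ConwayForm (G : AGame) : Prop :=
  G ≠ .inf ∧ G ≠ .binf ∧ ∀ H, Follower H G → ¬ IsCheck H

/-- A Conway game: a game equivalent to some Conway form. -/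
def ConwayGame (G : AGame) : Prop :=
  ∃ G', Valid G' ∧ ConwayForm G' ∧ Equiv G G'

/-- `J` is invertible: `J + K = 0` (in the sense of game equivalence) for some affine `K`. -/
def Invertible (J : AGame) : Prop :=
  ∃ K, Valid K ∧ ∃ S, add J K = some S ∧ Equiv S zero

/-- Number forms: the images of the surreal-number Conway forms under the embedding
that replaces an empty option set by `{∞̄}` on the Left and by `{∞}` on the Right.
Every genuine Left option is strictly less than every genuine Right option, and
all genuine options are again number forms. -/
inductive NumForm : AGame → Prop
  | mk {L R : List AGame}
      (hL0 : L ≠ []) (hR0 : R ≠ [])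
      (hLb : .binf ∈ L → L = [.binf]) (hRi : .inf ∈ R → R = [.inf])
      (hLnum : ∀ x ∈ L, x ≠ .binf → NumForm x)
      (hRnum : ∀ y ∈ R, y ≠ .inf → NumForm y)
      (hlt : ∀ x ∈ L, ∀ y ∈ R, x ≠ .binf → y ≠ .inf → GE y x ∧ ¬ GE x y) :
      NumForm (.node L R)

/-- A number: an affine game equal to (the image of) a Conway number form. -/
def IsNumber (G : AGame) : Prop := ∃ n, Valid n ∧ NumForm n ∧ Equiv G n

/-- The pathetic tiny `⧾∞ = {0 | {0 | ∞̄}}`. -/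
def tinyInf : AGame := .node [zero] [.node [zero] [.binf]]

/-- The pathetic miny `⧿∞ = {{∞ | 0} | 0}`. -/
def minyInf : AGame := .node [.node [.inf] [zero]] [zero]

end AGame

namespace AGame

private theorem list_any_attach (l : List AGame) (f : AGame → Bool) :
    (l.attach.any fun x => f x.1) = l.any f := by
  rw [Bool.eq_iff_iff]
  simp only [List.any_eq_true, List.mem_attach, true_and, Subtype.exists]
  exact ⟨fun ⟨a, ha, h⟩ => ⟨a, ha, h⟩, fun ⟨a, ha, h⟩ => ⟨a, ha, h⟩⟩

private theorem list_all_attach (l : List AGame) (f : AGame → Bool) :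
    (l.attach.all fun x => f x.1) = l.all f := by
  rw [Bool.eq_iff_iff]
  simp only [List.all_eq_true, List.mem_attach, true_implies, Subtype.forall]

private theorem list_any_congr {l : List AGame} {f g : AGame → Bool}
    (h : ∀ a ∈ l, f a = g a) : l.any f = l.any g := by
  induction l with
  | nil => rfl
  | cons a t ih =>
    simp only [List.any_cons]
    rw [h a (by simp), ih fun b hb => h b (by simp [hb])]

private theorem list_all_congr {l : List AGame} {f g : AGame → Bool}
    (h : ∀ a ∈ l, f a = g a) : l.all f = l.all g := by
  induction l with
  | nil => rfl
  | cons a t ih =>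
    simp only [List.all_cons]
    rw [h a (by simp), ih fun b hb => h b (by simp [hb])]

private theorem lf_node (L R : List AGame) : lf (.node L R) = L.any ls := by
  rw [lf, list_any_attach]

private theorem ls_node (L R : List AGame) : ls (.node L R) = R.all lf := by
  rw [ls, list_all_attach]

private theorem lf_inf : lf .inf = true := by rw [lf]
private theorem lf_binf : lf .binf = false := by rw [lf]
private theorem ls_inf : ls .inf = true := by rw [ls]
private theorem ls_binf : ls .binf = false := by rw [ls]

private theorem add'_inf_left (X : AGame) : add' .inf X = .inf := by rw [add']
private theorem add'_binf_node (L R : List AGame) : add' .binf (.node L R) = .binf := by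
  rw [add'] <;> simp
private theorem add'_node_inf (L R : List AGame) : add' (.node L R) .inf = .inf := by
  rw [add'] <;> simp
private theorem add'_node_binf (L R : List AGame) : add' (.node L R) .binf = .binf := by
  rw [add'] <;> simp
private theorem add'_binf_zero : add' .binf zero = .binf := add'_binf_node _ _

private theorem add'_node_node (L R L' R' : List AGame) :
    add' (.node L R) (.node L' R') =
      .node (L.map (fun g => add' g (.node L' R')) ++ L'.map (fun g => add' (.node L R) g))
            (R.map (fun g => add' g (.node L' R')) ++ R'.map (fun g => add' (.node L R) g)) := by
  rw [add']
  rw [List.attach_map_val (l := L) (f := fun g => add' g (.node L' R')),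
      List.attach_map_val (l := R) (f := fun g => add' g (.node L' R')),
      List.attach_map_val (l := L') (f := fun g => add' (.node L R) g),
      List.attach_map_val (l := R') (f := fun g => add' (.node L R) g)]

private theorem add'_zero_node (L R : List AGame) :
    add' (.node L R) zero =
      .node (L.map (fun g => add' g zero) ++ [.binf])
            (R.map (fun g => add' g zero) ++ [.inf]) := by
  rw [zero, add'_node_node]
  rw [show ([AGame.binf].map fun g => add' (.node L R) g) = [.binf] by
        simp [add'_node_binf],
      show ([AGame.inf].map fun g => add' (.node L R) g) = [.inf] by
        simp [add'_node_inf]]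

private theorem key (G X : AGame) :
    lf (add' (add' G zero) X) = lf (add' G X) ∧
    ls (add' (add' G zero) X) = ls (add' G X) := by
  cases G with
  | inf => rw [add'_inf_left]; exact ⟨rfl, rfl⟩
  | binf => rw [add'_binf_zero]; exact ⟨rfl, rfl⟩
  | node L R =>
    cases X with
    | inf => rw [add'_node_inf, add'_zero_node, add'_node_inf]; exact ⟨rfl, rfl⟩
    | binf => rw [add'_node_binf, add'_zero_node, add'_node_binf]; exact ⟨rfl, rfl⟩
    | node L' R' =>
      have hL : ∀ g ∈ L, ls (add' (add' g zero) (.node L' R')) = ls (add' g (.node L' R')) :=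
        fun g hg => (key g (.node L' R')).2
      have hR : ∀ g ∈ R, lf (add' (add' g zero) (.node L' R')) = lf (add' g (.node L' R')) :=
        fun g hg => (key g (.node L' R')).1
      have hL' : ∀ x ∈ L', ls (add' (add' (.node L R) zero) x) = ls (add' (.node L R) x) :=
        fun x hx => (key (.node L R) x).2
      have hR' : ∀ x ∈ R', lf (add' (add' (.node L R) zero) x) = lf (add' (.node L R) x) :=
        fun x hx => (key (.node L R) x).1
      rw [add'_zero_node, add'_node_node, add'_node_node, lf_node, lf_node, ls_node, ls_node,
          ← add'_zero_node]
      simp only [List.map_append, List.map_map, List.any_append, List.all_append,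
        List.map_cons, List.map_nil, List.any_cons, List.any_nil, List.all_cons, List.all_nil,
        List.any_map, List.all_map, Function.comp_def,
        add'_binf_node, ls_binf, add'_inf_left, lf_inf,
        Bool.or_false, Bool.and_true, Bool.false_or, Bool.true_and]
      constructor
      · rw [list_any_congr hL, list_any_congr hL']
      · rw [list_all_congr hR, list_all_congr hR']
termination_by sizeOf G + sizeOf X
decreasing_by
  · have := List.sizeOf_lt_of_mem hg; simp_all; omega
  · have := List.sizeOf_lt_of_mem hg; simp_all; omega
  · have := List.sizeOf_lt_of_mem hx; simp_all; omega
  · have := List.sizeOf_lt_of_mem hx; simp_all; omega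

/-- The game `{∞̄ | ∞}` is the identity of affine normal play. -/
theorem add_zero_equiv (G : AGame) (hG : Valid G) : Equiv (add' G zero) G := by
  intro X _ _ _
  have h := key G X
  simp only [outcome, h.1, h.2]
end AGame
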